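/- Generalized Grönwall-type inequality (Lemma A.1): Let T > 0 be fixed, and let x and y be locally integrable real-valued functions on (0,∞) satisfying: liminf_{t→∞} ∫_t^{t+T} x(τ) dτ > 0; limsup_{t→∞} ∫_t^{t+T} x⁻(τ) dτ < ∞; and lim_{t→∞} ∫_t^{t+T} y⁺(τ) dτ = 0, where x⁻ = max{−x, 0} and y⁺ = max{y, 0}. Let ξ be an absolutely continuous nonnegative function on (0,∞), i.e., there exists a locally integrable function g on (0,∞) such that ξ(t) = ξ(t₀) + ∫_{t₀}^{t} g(τ) dτ for all 0 < t₀ ≤ t (so ξ' = g almost everywhere). If for some constant p ∈ (0,1] the differential inequality ξ'(t) + x(t) ξ(t) ≤ y(t) + y(t) ξ(t)^{p} holds for almost every t ∈ (0,∞), then ξ(t) → 0 as t → ∞. -/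

import Mathlib

set_option maxHeartbeats 1600000

open MeasureTheory Set Filter

section GGAux

open intervalIntegral Nat

lemma gg_swap {a b : ℝ} {u v : ℝ → ℝ}
    (hu : IntegrableOn u (Ioc a b)) (hv : IntegrableOn v (Ioc a b)) :
    ∫ τ in Ioc a b, u τ * ∫ σ in Ioc a τ, v σ
      = ∫ σ in Ioc a b, (∫ τ in Ioc σ b, u τ) * v σ := by
  set μ := volume.restrict (Ioc a b) with hμ
  set D : Set (ℝ × ℝ) := {p : ℝ × ℝ | p.2 < p.1} with hD
  have hDm : MeasurableSet D := (isOpen_lt continuous_snd continuous_fst).measurableSet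
  set F : ℝ × ℝ → ℝ := D.indicator (fun p => u p.1 * v p.2) with hF
  have hFint : Integrable F (μ.prod μ) := (hu.mul_prod hv).indicator hDm
  have h1 : ∀ τ ∈ Ioc a b, (∫ σ, F (τ, σ) ∂μ) = u τ * ∫ σ in Ioc a τ, v σ := by
    intro τ hτ
    have e1 : (fun σ => F (τ, σ)) = (Iio τ).indicator (fun σ => u τ * v σ) := by
      ext σ; simp [hF, hD, Set.indicator_apply]
    have e2 : Ioc a b ∩ Iio τ = Ioo a τ := by
      ext σ
      simp only [mem_inter_iff, mem_Ioc, mem_Iio, mem_Ioo]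
      exact ⟨fun h => ⟨h.1.1, h.2⟩, fun h => ⟨⟨h.1, h.2.le.trans hτ.2⟩, h.2⟩⟩
    rw [e1, hμ, setIntegral_indicator measurableSet_Iio, e2,
      ← integral_Ioc_eq_integral_Ioo, MeasureTheory.integral_const_mul]
  have h2 : ∀ σ ∈ Ioc a b, (∫ τ, F (τ, σ) ∂μ) = (∫ τ in Ioc σ b, u τ) * v σ := by
    intro σ hσ
    have e1 : (fun τ => F (τ, σ)) = (Ioi σ).indicator (fun τ => u τ * v σ) := by
      ext τ; simp [hF, hD, Set.indicator_apply]
    have e2 : Ioc a b ∩ Ioi σ = Ioc σ b := by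
      ext τ
      simp only [mem_inter_iff, mem_Ioc, mem_Ioi]
      exact ⟨fun h => ⟨h.2, h.1.2⟩, fun h => ⟨⟨hσ.1.trans h.1, h.2⟩, h.1⟩⟩
    rw [e1, hμ, setIntegral_indicator measurableSet_Ioi, e2, MeasureTheory.integral_mul_const]
  calc ∫ τ in Ioc a b, u τ * ∫ σ in Ioc a τ, v σ
      = ∫ τ, (∫ σ, F (τ, σ) ∂μ) ∂μ := (setIntegral_congr_fun measurableSet_Ioc h1).symm
    _ = ∫ σ, (∫ τ, F (τ, σ) ∂μ) ∂μ := integral_integral_swap hFint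
    _ = ∫ σ in Ioc a b, (∫ τ in Ioc σ b, u τ) * v σ :=
        setIntegral_congr_fun measurableSet_Ioc h2


lemma gg_cont_primitive {a b : ℝ} (hab : a ≤ b) {f : ℝ → ℝ}
    (hf : IntegrableOn f (Icc a b)) :
    ContinuousOn (fun τ => ∫ σ in a..τ, f σ) (Icc a b) := by
  have := continuousOn_primitive_interval (a := a) (b := b) (f := f) (μ := volume)
    (by rwa [uIcc_of_le hab])
  rwa [uIcc_of_le hab] at this


lemma gg_primitive_mul {a b : ℝ} (hab : a ≤ b) {u v : ℝ → ℝ}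
    (hu : IntegrableOn u (Icc a b)) (hv : IntegrableOn v (Icc a b)) :
    (∫ τ in a..b, u τ) * (∫ τ in a..b, v τ)
      = ∫ τ in a..b, (u τ * (∫ σ in a..τ, v σ) + (∫ σ in a..τ, u σ) * v τ) := by
  have hu' : IntegrableOn u (Ioc a b) := hu.mono_set Ioc_subset_Icc_self
  have hv' : IntegrableOn v (Ioc a b) := hv.mono_set Ioc_subset_Icc_self
  have hcu : ContinuousOn (fun τ => ∫ σ in a..τ, u σ) (Icc a b) := by
    have := continuousOn_primitive_interval (a := a) (b := b)
      (f := u) (μ := volume) (by rwa [uIcc_of_le hab])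
    rwa [uIcc_of_le hab] at this
  have hcv : ContinuousOn (fun τ => ∫ σ in a..τ, v σ) (Icc a b) := by
    have := continuousOn_primitive_interval (a := a) (b := b)
      (f := v) (μ := volume) (by rwa [uIcc_of_le hab])
    rwa [uIcc_of_le hab] at this
  have huV : IntegrableOn (fun τ => u τ * ∫ σ in a..τ, v σ) (Icc a b) :=
    IntegrableOn.mul_continuousOn hu hcv isCompact_Icc
  have hUv : IntegrableOn (fun τ => (∫ σ in a..τ, u σ) * v τ) (Icc a b) :=
    IntegrableOn.continuousOn_mul hcu hv isCompact_Icc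
  have hiu : ∀ c ∈ Icc a b, IntervalIntegrable u volume a c := by
    intro c hc
    have : IntegrableOn u (uIcc a c) := by
      rw [uIcc_of_le hc.1]; exact hu.mono_set (Icc_subset_Icc le_rfl hc.2)
    exact this.intervalIntegrable
  have hiV : IntervalIntegrable (fun τ => u τ * ∫ σ in a..τ, v σ) volume a b := by
    rw [intervalIntegrable_iff_integrableOn_Ioc_of_le hab]
    exact huV.mono_set Ioc_subset_Icc_self
  have hiU : IntervalIntegrable (fun τ => (∫ σ in a..τ, u σ) * v τ) volume a b := by
    rw [intervalIntegrable_iff_integrableOn_Ioc_of_le hab]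
    exact hUv.mono_set Ioc_subset_Icc_self
  rw [intervalIntegral.integral_add hiV hiU, integral_of_le hab, integral_of_le hab,
    integral_of_le hab, integral_of_le hab]
  have hA : ∫ τ in Ioc a b, u τ * ∫ σ in a..τ, v σ
      = (∫ τ in Ioc a b, u τ) * (∫ τ in Ioc a b, v τ)
        - ∫ τ in Ioc a b, (∫ σ in a..τ, u σ) * v τ := by
    have e1 : ∫ τ in Ioc a b, u τ * ∫ σ in a..τ, v σ
        = ∫ τ in Ioc a b, u τ * ∫ σ in Ioc a τ, v σ := by
      refine setIntegral_congr_fun measurableSet_Ioc (fun τ hτ => ?_)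
      rw [integral_of_le hτ.1.le]
    rw [e1, gg_swap hu' hv']
    have e2 : ∫ σ in Ioc a b, (∫ τ in Ioc σ b, u τ) * v σ
        = ∫ σ in Ioc a b, ((∫ τ in Ioc a b, u τ) - (∫ τ in a..σ, u τ)) * v σ := by
      refine setIntegral_congr_fun measurableSet_Ioc (fun σ hσ => ?_)
      congr 1
      rw [← integral_of_le hab, ← integral_of_le hσ.2,
        integral_interval_sub_left (hiu b ⟨hab, le_rfl⟩) (hiu σ ⟨hσ.1.le, hσ.2⟩)]
    rw [e2]
    have e3 : ∀ σ, ((∫ τ in Ioc a b, u τ) - (∫ τ in a..σ, u τ)) * v σ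
        = (∫ τ in Ioc a b, u τ) * v σ - (∫ τ in a..σ, u τ) * v σ := fun σ => sub_mul _ _ _
    simp_rw [e3]
    rw [integral_sub (hv'.const_mul _) (hUv.mono_set Ioc_subset_Icc_self),
      MeasureTheory.integral_const_mul]
  rw [hA]; ring


lemma gg_pow_primitive {a : ℝ} {f : ℝ → ℝ}
    (hf : ∀ b, a ≤ b → IntegrableOn f (Icc a b)) (n : ℕ) :
    ∀ b, a ≤ b → (∫ τ in a..b, f τ * (∫ σ in a..τ, f σ) ^ n)
      = (∫ τ in a..b, f τ) ^ (n + 1) / (n + 1) := by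
  induction n with
  | zero => intro b hb; simp
  | succ n ih =>
    intro b hb
    have hcH : ContinuousOn (fun τ => ∫ σ in a..τ, f σ) (Icc a b) :=
      gg_cont_primitive hb (hf b hb)
    have hv : IntegrableOn (fun τ => f τ * (∫ σ in a..τ, f σ) ^ n) (Icc a b) :=
      IntegrableOn.mul_continuousOn (hf b hb) (hcH.pow n) isCompact_Icc
    have key := gg_primitive_mul hb (hf b hb) hv
    rw [ih b hb] at key
    have e : EqOn
        (fun τ => f τ * (∫ σ in a..τ, f σ * (∫ σ' in a..σ, f σ') ^ n)
          + (∫ σ in a..τ, f σ) * (f τ * (∫ σ in a..τ, f σ) ^ n))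
        (fun τ => (((n:ℝ)+2)/((n:ℝ)+1)) * (f τ * (∫ σ in a..τ, f σ) ^ (n+1)))
        (uIcc a b) := by
      intro τ hτ
      rw [uIcc_of_le hb] at hτ
      simp only
      rw [ih τ hτ.1]
      have hne : ((n:ℝ)+1) ≠ 0 := by positivity
      field_simp
      ring
    rw [intervalIntegral.integral_congr e, intervalIntegral.integral_const_mul] at key
    have hne : ((n:ℝ)+1) ≠ 0 := by positivity
    have hne2 : ((n:ℝ)+2) ≠ 0 := by positivity
    have goal2 : (∫ τ in a..b, f τ * (∫ σ in a..τ, f σ) ^ (n+1))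
        = (((n:ℝ)+1)/((n:ℝ)+2)) * ((∫ τ in a..b, f τ)
            * ((∫ τ in a..b, f τ) ^ (n+1) / ((n:ℝ)+1))) := by
      rw [key]; field_simp
    rw [goal2]
    push_cast
    field_simp
    ring


lemma gg_exp_primitive {a b : ℝ} (hab : a ≤ b) {f : ℝ → ℝ}
    (hf : ∀ c, a ≤ c → IntegrableOn f (Icc a c)) :
    Real.exp (∫ τ in a..b, f τ)
      = 1 + ∫ τ in a..b, f τ * Real.exp (∫ σ in a..τ, f σ) := by
  set H : ℝ → ℝ := fun τ => ∫ σ in a..τ, f σ with hHdef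
  have hcH : ContinuousOn H (Icc a b) := gg_cont_primitive hab (hf b hab)
  obtain ⟨C, hC⟩ := isCompact_Icc.exists_bound_of_continuousOn hcH
  have hC0 : 0 ≤ C := (norm_nonneg _).trans (hC a ⟨le_rfl, hab⟩)
  set μ := volume.restrict (Ioc a b) with hμ
  set F : ℕ → ℝ → ℝ := fun n τ => f τ * (H τ ^ n / n !) with hFdef
  have hFint : ∀ n, Integrable (F n) μ := by
    intro n
    exact (IntegrableOn.mul_continuousOn (hf b hab) ((hcH.pow n).div_const _)
      isCompact_Icc).mono_set Ioc_subset_Icc_self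
  have hfn : Integrable (fun τ => ‖f τ‖) μ :=
    ((hf b hab).mono_set Ioc_subset_Icc_self).norm
  have hnorm : ∀ n, (∫ τ, ‖F n τ‖ ∂μ) ≤ (∫ τ, ‖f τ‖ ∂μ) * (C ^ n / n !) := by
    intro n
    have hle : ∀ τ ∈ Ioc a b, ‖F n τ‖ ≤ ‖f τ‖ * (C ^ n / n !) := by
      intro τ hτ
      have hτ' : τ ∈ Icc a b := Ioc_subset_Icc_self hτ
      have h1 : ‖H τ ^ n / (n ! : ℝ)‖ ≤ C ^ n / n ! := by
        have hnf : ‖(n ! : ℝ)‖ = (n ! : ℝ) := by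
          rw [Real.norm_eq_abs, abs_of_pos]
          exact_mod_cast Nat.factorial_pos n
        rw [norm_div, norm_pow, hnf]
        gcongr
        exact hC τ hτ'
      calc ‖F n τ‖ = ‖f τ‖ * ‖H τ ^ n / (n ! : ℝ)‖ := norm_mul _ _
        _ ≤ ‖f τ‖ * (C ^ n / n !) := by
            exact mul_le_mul_of_nonneg_left h1 (norm_nonneg _)
    calc (∫ τ, ‖F n τ‖ ∂μ) ≤ ∫ τ in Ioc a b, ‖f τ‖ * (C ^ n / n !) :=
          setIntegral_mono_on (hFint n).norm (hfn.mul_const _) measurableSet_Ioc hle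
      _ = (∫ τ, ‖f τ‖ ∂μ) * (C ^ n / n !) := integral_mul_const _ _
  have hsum : Summable fun n => ∫ τ, ‖F n τ‖ ∂μ := by
    refine Summable.of_nonneg_of_le
      (fun n => integral_nonneg (fun τ => norm_nonneg _)) hnorm ?_
    exact (Real.summable_pow_div_factorial C).mul_left _
  have hs := hasSum_integral_of_summable_integral_norm hFint hsum
  have hpt : ∀ τ, (∑' n, F n τ) = f τ * Real.exp (H τ) := by
    intro τ
    have : Real.exp (H τ) = ∑' n, H τ ^ n / n ! := by
      rw [Real.exp_eq_exp_ℝ, NormedSpace.exp_eq_tsum_div]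
    rw [this, hFdef, tsum_mul_left]
  have hint : ∀ n, (∫ τ, F n τ ∂μ) = H b ^ (n+1) / (n+1)! := by
    intro n
    have e1 : (∫ τ, F n τ ∂μ) = (∫ τ in a..b, f τ * H τ ^ n) / n ! := by
      rw [integral_of_le hab, ← MeasureTheory.integral_div]
      refine setIntegral_congr_fun measurableSet_Ioc (fun τ _ => ?_)
      show F n τ = f τ * H τ ^ n / (Nat.factorial n : ℝ)
      rw [hFdef]; ring
    rw [e1, gg_pow_primitive hf n b hab]
    rw [div_div]
    congr 1
    push_cast [Nat.factorial_succ]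
    ring
  have hexp : HasSum (fun n : ℕ => H b ^ (n+1) / (n+1)!) (Real.exp (H b) - 1) := by
    have h0 : HasSum (fun n : ℕ => H b ^ n / n !) (Real.exp (H b)) := by
      rw [Real.exp_eq_exp_ℝ]
      exact NormedSpace.expSeries_div_hasSum_exp (H b)
    have h1 := (hasSum_nat_add_iff' 1).mpr h0
    simpa using h1
  have hs2 : HasSum (fun n => ∫ τ, F n τ ∂μ) (Real.exp (H b) - 1) := by
    have : (fun n => ∫ τ, F n τ ∂μ) = fun n : ℕ => H b ^ (n+1) / (n+1)! :=
      funext hint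
    rw [this]; exact hexp
  have hmain : (∫ τ, (∑' n, F n τ) ∂μ) = Real.exp (H b) - 1 := hs.unique hs2
  have : (∫ τ in a..b, f τ * Real.exp (H τ)) = Real.exp (H b) - 1 := by
    rw [integral_of_le hab, ← hmain]
    exact setIntegral_congr_fun measurableSet_Ioc (fun τ _ => (hpt τ).symm)
  rw [this]; ring


lemma gg_key (x y ξ g : ℝ → ℝ)
    (hx_int : ∀ a b : ℝ, 0 < a → IntegrableOn x (Icc a b))
    (hy_int : ∀ a b : ℝ, 0 < a → IntegrableOn y (Icc a b))
    (hg_int : ∀ a b : ℝ, 0 < a → IntegrableOn g (Icc a b))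
    (hξ_nonneg : ∀ t : ℝ, 0 < t → 0 ≤ ξ t)
    (hξ_ac : ∀ t0 t : ℝ, 0 < t0 → t0 ≤ t → ξ t = ξ t0 + ∫ τ in t0..t, g τ)
    (p : ℝ) (hp0 : 0 < p) (hp1 : p ≤ 1)
    (hineq : ∀ᵐ t : ℝ, 0 < t → g t + x t * ξ t ≤ y t + y t * ξ t ^ p)
    (a b : ℝ) (ha : 0 < a) (hab : a ≤ b) :
    ξ b * Real.exp (∫ τ in a..b, (x τ - max (y τ) 0))
      ≤ ξ a + 2 * ∫ τ in a..b, max (y τ) 0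
          * Real.exp (∫ σ in a..τ, (x σ - max (y σ) 0)) := by
  set h : ℝ → ℝ := fun τ => x τ - max (y τ) 0 with hh
  set E : ℝ → ℝ := fun τ => Real.exp (∫ σ in a..τ, h σ) with hE
  have hyp_int : ∀ c : ℝ, IntegrableOn (fun τ => max (y τ) 0) (Icc a c) :=
    fun c => (hy_int a c ha).pos_part
  have hh_int : ∀ c : ℝ, IntegrableOn h (Icc a c) :=
    fun c => (hx_int a c ha).sub (hyp_int c)
  have hh_int' : ∀ c : ℝ, a ≤ c → IntegrableOn h (Icc a c) := fun c _ => hh_int c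
  have hcE : ContinuousOn E (Icc a b) :=
    Real.continuous_exp.comp_continuousOn (gg_cont_primitive hab (hh_int b))
  have hcξ : ContinuousOn ξ (Icc a b) := by
    refine ContinuousOn.congr (f := fun τ => ξ a + ∫ σ in a..τ, g σ) ?_ ?_
    · exact continuousOn_const.add (gg_cont_primitive hab (hg_int a b ha))
    · intro τ hτ
      exact hξ_ac a τ ha hτ.1
  set v : ℝ → ℝ := fun τ => h τ * E τ with hv
  have hv_int : IntegrableOn v (Icc a b) :=
    IntegrableOn.mul_continuousOn (hh_int b) hcE isCompact_Icc
  have hEeq : ∀ c ∈ Icc a b, E c = 1 + ∫ σ in a..c, v σ := by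
    intro c hc
    exact gg_exp_primitive hc.1 (fun d hd => hh_int d)
  have hξeq : ∀ c ∈ Icc a b, ξ c = ξ a + ∫ σ in a..c, g σ := by
    intro c hc
    exact hξ_ac a c ha hc.1
  have key := gg_primitive_mul hab (hg_int a b ha) hv_int
  -- step 1: identity ξ b * E b = ξ a + ∫ (g + h ξ) E
  have e2 : (∫ τ in a..b, (g τ + h τ * ξ τ) * E τ)
      = (∫ σ in a..b, g σ) + ξ a * (∫ σ in a..b, v σ)
        + (∫ σ in a..b, g σ) * (∫ σ in a..b, v σ) := by
    have e1 : EqOn (fun τ => (g τ + h τ * ξ τ) * E τ)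
        (fun τ => (g τ * (∫ σ in a..τ, v σ) + (∫ σ in a..τ, g σ) * v τ)
          + (g τ + ξ a * v τ)) (uIcc a b) := by
      intro τ hτ
      rw [uIcc_of_le hab] at hτ
      simp only
      rw [hv]
      simp only
      have h1 : E τ = 1 + ∫ σ in a..τ, v σ := hEeq τ hτ
      have h2 : ξ τ = ξ a + ∫ σ in a..τ, g σ := hξeq τ hτ
      rw [h1, h2]
      ring
    rw [intervalIntegral.integral_congr e1]
    have i1 : IntervalIntegrable
        (fun τ => g τ * (∫ σ in a..τ, v σ) + (∫ σ in a..τ, g σ) * v τ) volume a b := by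
      rw [intervalIntegrable_iff_integrableOn_Ioc_of_le hab]
      refine IntegrableOn.mono_set ?_ Ioc_subset_Icc_self
      exact (IntegrableOn.mul_continuousOn (hg_int a b ha)
          (gg_cont_primitive hab hv_int) isCompact_Icc).add
        (IntegrableOn.continuousOn_mul (gg_cont_primitive hab (hg_int a b ha))
          hv_int isCompact_Icc)
    have i2 : IntervalIntegrable (fun τ => g τ + ξ a * v τ) volume a b := by
      rw [intervalIntegrable_iff_integrableOn_Ioc_of_le hab]
      have : IntegrableOn (fun τ => g τ + ξ a * v τ) (Icc a b) :=
        (hg_int a b ha).add (hv_int.const_mul _)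
      exact this.mono_set Ioc_subset_Icc_self
    have ig : IntervalIntegrable g volume a b := by
      rw [intervalIntegrable_iff_integrableOn_Ioc_of_le hab]
      exact (hg_int a b ha).mono_set Ioc_subset_Icc_self
    have iv2 : IntervalIntegrable (fun τ => ξ a * v τ) volume a b := by
      rw [intervalIntegrable_iff_integrableOn_Ioc_of_le hab]
      have : IntegrableOn (fun τ => ξ a * v τ) (Icc a b) := hv_int.const_mul _
      exact this.mono_set Ioc_subset_Icc_self
    rw [intervalIntegral.integral_add i1 i2]
    rw [← key]
    rw [intervalIntegral.integral_add ig iv2]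
    rw [intervalIntegral.integral_const_mul]
    ring
  have e3 : ξ b * E b = ξ a + ∫ τ in a..b, (g τ + h τ * ξ τ) * E τ := by
    rw [e2, hξeq b ⟨hab, le_rfl⟩, hEeq b ⟨hab, le_rfl⟩]
    ring
  -- step 2: a.e. bound (g + h ξ) E ≤ 2 y⁺ E
  have mono : (∫ τ in a..b, (g τ + h τ * ξ τ) * E τ)
      ≤ ∫ τ in a..b, 2 * (max (y τ) 0 * E τ) := by
    have iL : IntervalIntegrable (fun τ => (g τ + h τ * ξ τ) * E τ) volume a b := by
      rw [intervalIntegrable_iff_integrableOn_Ioc_of_le hab]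
      refine IntegrableOn.mono_set ?_ Ioc_subset_Icc_self
      exact IntegrableOn.mul_continuousOn
        ((hg_int a b ha).add (IntegrableOn.mul_continuousOn (hh_int b) hcξ isCompact_Icc))
        hcE isCompact_Icc
    have iR : IntervalIntegrable (fun τ => 2 * (max (y τ) 0 * E τ)) volume a b := by
      rw [intervalIntegrable_iff_integrableOn_Ioc_of_le hab]
      have : IntegrableOn (fun τ => 2 * (max (y τ) 0 * E τ)) (Icc a b) :=
        (IntegrableOn.mul_continuousOn (hyp_int b) hcE isCompact_Icc).const_mul _
      exact this.mono_set Ioc_subset_Icc_self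
    refine intervalIntegral.integral_mono_ae_restrict hab iL iR ?_
    have hmem : ∀ᵐ τ ∂(volume.restrict (Icc a b)), τ ∈ Icc a b :=
      ae_restrict_mem measurableSet_Icc
    filter_upwards [hmem, ae_restrict_of_ae hineq] with τ hτ hineqτ
    have hτpos : 0 < τ := lt_of_lt_of_le ha hτ.1
    have hξτ : 0 ≤ ξ τ := hξ_nonneg τ hτpos
    have hstep : g τ + h τ * ξ τ ≤ 2 * max (y τ) 0 := by
      have h0 : g τ + x τ * ξ τ ≤ y τ + y τ * ξ τ ^ p := hineqτ hτpos
      have hrp : (0:ℝ) ≤ ξ τ ^ p := Real.rpow_nonneg hξτ p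
      have hy1 : y τ ≤ max (y τ) 0 := le_max_left _ _
      have hy2 : y τ * ξ τ ^ p ≤ max (y τ) 0 * ξ τ ^ p :=
        mul_le_mul_of_nonneg_right hy1 hrp
      have hpow : ξ τ ^ p ≤ 1 + ξ τ := by
        rcases le_total (ξ τ) 1 with hc | hc
        · have := Real.rpow_le_one hξτ hc hp0.le
          linarith
        · have h1 := Real.rpow_le_rpow_of_exponent_le hc hp1
          rw [Real.rpow_one] at h1
          linarith
      have hy3 : max (y τ) 0 * ξ τ ^ p ≤ max (y τ) 0 * (1 + ξ τ) :=
        mul_le_mul_of_nonneg_left hpow (le_max_right _ _)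
      have : h τ * ξ τ = x τ * ξ τ - max (y τ) 0 * ξ τ := by rw [hh]; ring
      rw [this]
      nlinarith [le_max_right (y τ) (0:ℝ)]
    calc (g τ + h τ * ξ τ) * E τ ≤ (2 * max (y τ) 0) * E τ :=
          mul_le_mul_of_nonneg_right hstep (Real.exp_pos _).le
      _ = 2 * (max (y τ) 0 * E τ) := by ring
  rw [intervalIntegral.integral_const_mul] at mono
  calc ξ b * E b = ξ a + ∫ τ in a..b, (g τ + h τ * ξ τ) * E τ := e3
    _ ≤ ξ a + 2 * ∫ τ in a..b, max (y τ) 0 * E τ := by linarith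


end GGAux

section GGMain

open intervalIntegral Nat

/-- **Lemma A.1** (Holst–Lunasin–Tsogtgerel): generalized Grönwall-type
inequality.  Here `g` plays the role of `ξ'` (so that `ξ` is absolutely
continuous on `(0,∞)` with derivative `g` a.e.), "`liminf > 0`" is expressed
as "eventually bounded below by some `δ > 0`", and "`limsup < ∞`" as
"eventually bounded above by some `M`". -/
theorem generalized_gronwall
    (T : ℝ) (hT : 0 < T)
    (x y : ℝ → ℝ)
    -- local integrability on (0,∞)
    (hx_int : ∀ a b : ℝ, 0 < a → IntegrableOn x (Icc a b))
    (hy_int : ∀ a b : ℝ, 0 < a → IntegrableOn y (Icc a b))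
    -- liminf_{t→∞} ∫_t^{t+T} x > 0
    (hx1 : ∃ δ : ℝ, 0 < δ ∧ ∀ᶠ t in atTop, δ ≤ ∫ τ in t..(t + T), x τ)
    -- limsup_{t→∞} ∫_t^{t+T} x⁻ < ∞
    (hx2 : ∃ M : ℝ, ∀ᶠ t in atTop, (∫ τ in t..(t + T), max (-x τ) 0) ≤ M)
    -- lim_{t→∞} ∫_t^{t+T} y⁺ = 0
    (hy : Tendsto (fun t => ∫ τ in t..(t + T), max (y τ) 0) atTop (nhds 0))
    -- ξ absolutely continuous and nonnegative on (0,∞), with ξ' = g a.e.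
    (ξ g : ℝ → ℝ)
    (hg_int : ∀ a b : ℝ, 0 < a → IntegrableOn g (Icc a b))
    (hξ_nonneg : ∀ t : ℝ, 0 < t → 0 ≤ ξ t)
    (hξ_ac : ∀ t0 t : ℝ, 0 < t0 → t0 ≤ t → ξ t = ξ t0 + ∫ τ in t0..t, g τ)
    -- the differential inequality ξ' + x ξ ≤ y + y ξ^p a.e. on (0,∞)
    (p : ℝ) (hp0 : 0 < p) (hp1 : p ≤ 1)
    (hineq : ∀ᵐ t : ℝ, 0 < t → g t + x t * ξ t ≤ y t + y t * ξ t ^ p) :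
    Tendsto ξ atTop (nhds 0) := by
  obtain ⟨δ, hδpos, hδev⟩ := hx1
  obtain ⟨M₀, hM₀ev⟩ := hx2
  set M : ℝ := max M₀ 0 with hMdef
  have hMev : ∀ᶠ t in atTop, (∫ τ in t..(t + T), max (-x τ) 0) ≤ M :=
    hM₀ev.mono fun t ht => ht.trans (le_max_left _ _)
  have hM0 : 0 ≤ M := le_max_right _ _
  set q₀ : ℝ := Real.exp (-(δ/2)) with hq₀def
  have hq₀1 : q₀ < 1 := Real.exp_lt_one_iff.2 (by linarith)
  have hq₀pos : 0 < q₀ := Real.exp_pos _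
  set A : ℝ := Real.exp (M + 1) with hAdef
  have hA1 : 1 ≤ A := Real.one_le_exp (by linarith)
  have hApos : 0 < A := lt_of_lt_of_le one_pos hA1
  rw [Metric.tendsto_atTop]
  intro ε hε
  have h1q₀ : 0 < 1 - q₀ := by linarith
  set ε₁ : ℝ := min (min (δ/2) 1) (ε * (1 - q₀) / (8 * A * A)) with hε₁def
  have hε₁pos : 0 < ε₁ := lt_min (lt_min (by linarith) one_pos) (by positivity)
  have hε₁δ : ε₁ ≤ δ/2 := (min_le_left _ _).trans (min_le_left _ _)
  have hε₁1 : ε₁ ≤ 1 := (min_le_left _ _).trans (min_le_right _ _)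
  have hε₁ε : ε₁ ≤ ε * (1 - q₀) / (8 * A * A) := min_le_right _ _
  have hyev : ∀ᶠ t in atTop, (∫ τ in t..(t + T), max (y τ) 0) ≤ ε₁ :=
    hy.eventually (eventually_le_nhds hε₁pos)
  obtain ⟨t₁, ht₁⟩ := eventually_atTop.1 ((hδev.and (hMev.and hyev)))
  set s : ℝ := max t₁ 1 with hsdef
  have hspos : 0 < s := lt_of_lt_of_le one_pos (le_max_right _ _)
  have hwin : ∀ a, s ≤ a →
      (δ ≤ ∫ τ in a..(a+T), x τ) ∧ ((∫ τ in a..(a+T), max (-x τ) 0) ≤ M)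
        ∧ ((∫ τ in a..(a+T), max (y τ) 0) ≤ ε₁) :=
    fun a haa => ht₁ a ((le_max_left _ _).trans haa)
  set h : ℝ → ℝ := fun τ => x τ - max (y τ) 0 with hhdef
  -- integrability helpers
  have hxneg_int : ∀ a b : ℝ, 0 < a → IntegrableOn (fun τ => max (-x τ) 0) (Icc a b) :=
    fun a b ha => (hx_int a b ha).neg.pos_part
  have hyp_int : ∀ a b : ℝ, 0 < a → IntegrableOn (fun τ => max (y τ) 0) (Icc a b) :=
    fun a b ha => (hy_int a b ha).pos_part
  have hh_int : ∀ a b : ℝ, 0 < a → IntegrableOn h (Icc a b) :=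
    fun a b ha => (hx_int a b ha).sub (hyp_int a b ha)
  have hii : ∀ (f : ℝ → ℝ), (∀ a b : ℝ, 0 < a → IntegrableOn f (Icc a b)) →
      ∀ a b : ℝ, 0 < a → a ≤ b → IntervalIntegrable f volume a b := by
    intro f hf a b ha hab
    rw [intervalIntegrable_iff_integrableOn_Ioc_of_le hab]
    exact (hf a b ha).mono_set Ioc_subset_Icc_self
  -- window estimates on subintervals
  have hxneg_sub : ∀ c d : ℝ, s ≤ c → c ≤ d → d ≤ c + T →
      (∫ τ in c..d, max (-x τ) 0) ≤ M := by
    intro c d hc hcd hdT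
    have hcpos : 0 < c := lt_of_lt_of_le hspos hc
    refine le_trans ?_ (hwin c hc).2.1
    refine intervalIntegral.integral_mono_interval le_rfl hcd hdT ?_ ?_
    · filter_upwards with τ using le_max_right _ _
    · exact hii _ hxneg_int c (c+T) hcpos (by linarith)
  have hyp_sub : ∀ c d : ℝ, s ≤ c → c ≤ d → d ≤ c + T →
      (∫ τ in c..d, max (y τ) 0) ≤ ε₁ := by
    intro c d hc hcd hdT
    have hcpos : 0 < c := lt_of_lt_of_le hspos hc
    refine le_trans ?_ (hwin c hc).2.2
    refine intervalIntegral.integral_mono_interval le_rfl hcd hdT ?_ ?_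
    · filter_upwards with τ using le_max_right _ _
    · exact hii _ hyp_int c (c+T) hcpos (by linarith)
  have hyp_nonneg : ∀ c d : ℝ, c ≤ d → 0 ≤ ∫ τ in c..d, max (y τ) 0 := by
    intro c d hcd
    exact intervalIntegral.integral_nonneg hcd (fun τ _ => le_max_right _ _)
  -- lower bound on ∫ h over subintervals of windows
  have hIlow : ∀ c d : ℝ, s ≤ c → c ≤ d → d ≤ c + T →
      -(M + ε₁) ≤ ∫ τ in c..d, h τ := by
    intro c d hc hcd hdT
    have hcpos : 0 < c := lt_of_lt_of_le hspos hc
    have hxlow : -M ≤ ∫ τ in c..d, x τ := by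
      have h1 : (∫ τ in c..d, -(max (-x τ) 0)) ≤ ∫ τ in c..d, x τ := by
        refine intervalIntegral.integral_mono_on hcd
          ((hii _ hxneg_int c d hcpos hcd).neg) (hii _ hx_int c d hcpos hcd) ?_
        intro τ _
        have := le_max_left (-x τ) (0:ℝ)
        linarith
      rw [intervalIntegral.integral_neg] at h1
      have h2 := hxneg_sub c d hc hcd hdT
      linarith
    have hyup : (∫ τ in c..d, max (y τ) 0) ≤ ε₁ := hyp_sub c d hc hcd hdT
    have hsplit : (∫ τ in c..d, h τ)
        = (∫ τ in c..d, x τ) - ∫ τ in c..d, max (y τ) 0 :=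
      intervalIntegral.integral_sub (hii _ hx_int c d hcpos hcd)
        (hii _ hyp_int c d hcpos hcd)
    rw [hsplit]
    linarith
  -- lower bound on full windows
  have hIwin : ∀ a : ℝ, s ≤ a → δ - ε₁ ≤ ∫ τ in a..(a+T), h τ := by
    intro a ha
    have hapos : 0 < a := lt_of_lt_of_le hspos ha
    have hsplit : (∫ τ in a..(a+T), h τ)
        = (∫ τ in a..(a+T), x τ) - ∫ τ in a..(a+T), max (y τ) 0 :=
      intervalIntegral.integral_sub (hii _ hx_int a (a+T) hapos (by linarith))
        (hii _ hyp_int a (a+T) hapos (by linarith))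
    rw [hsplit]
    have h1 := (hwin a ha).1
    have h2 := (hwin a ha).2.2
    linarith
  -- one-step estimate
  have A1 : ∀ a b : ℝ, s ≤ a → a ≤ b → b ≤ a + T →
      ξ b ≤ Real.exp (-(∫ τ in a..b, h τ)) * ξ a + 2 * Real.exp (M + ε₁) * ε₁ := by
    intro a b ha hab hbT
    have hapos : 0 < a := lt_of_lt_of_le hspos ha
    have hkey := gg_key x y ξ g hx_int hy_int hg_int hξ_nonneg hξ_ac p hp0 hp1 hineq
      a b hapos hab
    set I : ℝ := ∫ τ in a..b, h τ with hIdef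
    have hEb : ∀ τ ∈ Icc a b, Real.exp (∫ σ in a..τ, h σ)
        ≤ Real.exp I * Real.exp (M + ε₁) := by
      intro τ hτ
      have hsplit : (∫ σ in a..τ, h σ) + (∫ σ in τ..b, h σ) = I :=
        intervalIntegral.integral_add_adjacent_intervals
          (hii _ hh_int a τ hapos hτ.1) (hii _ hh_int τ b (lt_of_lt_of_le hapos hτ.1) hτ.2)
      have hlow : -(M + ε₁) ≤ ∫ σ in τ..b, h σ :=
        hIlow τ b (ha.trans hτ.1) hτ.2 (by linarith [hτ.1])
      rw [← Real.exp_add]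
      exact Real.exp_le_exp.2 (by linarith)
    have hcE : ContinuousOn (fun τ => Real.exp (∫ σ in a..τ, h σ)) (Icc a b) :=
      Real.continuous_exp.comp_continuousOn (gg_cont_primitive hab (hh_int a b hapos))
    have hbd : (∫ τ in a..b, max (y τ) 0 * Real.exp (∫ σ in a..τ, h σ))
        ≤ (Real.exp I * Real.exp (M + ε₁)) * ε₁ := by
      have hmono : (∫ τ in a..b, max (y τ) 0 * Real.exp (∫ σ in a..τ, h σ))
          ≤ ∫ τ in a..b, max (y τ) 0 * (Real.exp I * Real.exp (M + ε₁)) := by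
        refine intervalIntegral.integral_mono_on hab ?_ ?_ ?_
        · rw [intervalIntegrable_iff_integrableOn_Ioc_of_le hab]
          exact (IntegrableOn.mul_continuousOn (hyp_int a b hapos) hcE
            isCompact_Icc).mono_set Ioc_subset_Icc_self
        · exact (hii _ hyp_int a b hapos hab).mul_const _
        · intro τ hτ
          exact mul_le_mul_of_nonneg_left (hEb τ hτ) (le_max_right _ _)
      rw [intervalIntegral.integral_mul_const] at hmono
      have h2 : (∫ τ in a..b, max (y τ) 0) ≤ ε₁ := hyp_sub a b ha hab hbT
      have h3 : (0:ℝ) ≤ Real.exp I * Real.exp (M + ε₁) := by positivity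
      nlinarith [hyp_nonneg a b hab]
    have final : ξ b * Real.exp I ≤ ξ a + 2 * ((Real.exp I * Real.exp (M + ε₁)) * ε₁) := by
      have := hkey
      nlinarith [hbd]
    calc ξ b = (ξ b * Real.exp I) * Real.exp (-I) := by
          rw [mul_assoc, ← Real.exp_add, add_neg_cancel, Real.exp_zero, mul_one]
      _ ≤ (ξ a + 2 * ((Real.exp I * Real.exp (M + ε₁)) * ε₁)) * Real.exp (-I) :=
          mul_le_mul_of_nonneg_right final (Real.exp_pos _).le
      _ = Real.exp (-I) * ξ a
            + 2 * Real.exp (M + ε₁) * ε₁ * (Real.exp I * Real.exp (-I)) := by ring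
      _ = Real.exp (-I) * ξ a + 2 * Real.exp (M + ε₁) * ε₁ := by
          rw [← Real.exp_add, add_neg_cancel, Real.exp_zero, mul_one]
  have A1' : ∀ a b : ℝ, s ≤ a → a ≤ b → b ≤ a + T →
      ξ b ≤ Real.exp (M + ε₁) * ξ a + 2 * Real.exp (M + ε₁) * ε₁ := by
    intro a b ha hab hbT
    refine (A1 a b ha hab hbT).trans ?_
    have h1 : Real.exp (-(∫ τ in a..b, h τ)) ≤ Real.exp (M + ε₁) :=
      Real.exp_le_exp.2 (by linarith [hIlow a b ha hab hbT])
    have h2 : 0 ≤ ξ a := hξ_nonneg a (lt_of_lt_of_le hspos ha)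
    nlinarith
  have A2 : ∀ a : ℝ, s ≤ a →
      ξ (a + T) ≤ Real.exp (-(δ - ε₁)) * ξ a + 2 * Real.exp (M + ε₁) * ε₁ := by
    intro a ha
    refine (A1 a (a+T) ha (by linarith) le_rfl).trans ?_
    have h1 : Real.exp (-(∫ τ in a..(a+T), h τ)) ≤ Real.exp (-(δ - ε₁)) :=
      Real.exp_le_exp.2 (by linarith [hIwin a ha])
    have h2 : 0 ≤ ξ a := hξ_nonneg a (lt_of_lt_of_le hspos ha)
    nlinarith
  set q : ℝ := Real.exp (-(δ - ε₁)) with hqdef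
  have hqpos : 0 < q := Real.exp_pos _
  have hqq₀ : q ≤ q₀ := Real.exp_le_exp.2 (by linarith)
  set c : ℝ := 2 * Real.exp (M + ε₁) * ε₁ with hcdef
  have hcpos : 0 < c := by positivity
  have hcA : c ≤ 2 * A * ε₁ := by
    have hexp : Real.exp (M + ε₁) ≤ A := Real.exp_le_exp.2 (by linarith)
    have := mul_le_mul_of_nonneg_right hexp hε₁pos.le
    nlinarith
  -- discrete iteration
  have B : ∀ n : ℕ, ξ (s + n * T) ≤ q ^ n * ξ s + c / (1 - q₀) := by
    intro n
    induction n with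
    | zero =>
      have h0 : 0 ≤ c / (1 - q₀) := by positivity
      simp only [Nat.cast_zero, zero_mul, add_zero, pow_zero, one_mul]
      linarith
    | succ n ih =>
      have hsa : s ≤ s + n * T := le_add_of_nonneg_right (by positivity)
      have step := A2 (s + n * T) hsa
      have hrw : s + ((n:ℕ)+1 : ℕ) * T = (s + n * T) + T := by push_cast; ring
      rw [hrw]
      have hξa : 0 ≤ ξ (s + n * T) :=
        hξ_nonneg _ (lt_of_lt_of_le hspos hsa)
      have hchain : ξ ((s + n * T) + T) ≤ q * (q ^ n * ξ s + c / (1 - q₀)) + c := by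
        refine step.trans ?_
        have := mul_le_mul_of_nonneg_left ih hqpos.le
        linarith
      refine hchain.trans ?_
      have hident : q * (c / (1 - q₀)) + c + c * (q₀ - q) / (1 - q₀) = c / (1 - q₀) := by
        field_simp
        ring
      have hnn : 0 ≤ c * (q₀ - q) / (1 - q₀) :=
        div_nonneg (mul_nonneg hcpos.le (by linarith)) (by linarith)
      have hpow : q * (q ^ n * ξ s) = q ^ (n+1) * ξ s := by rw [pow_succ]; ring
      nlinarith
  -- choose n₀ and conclude
  have hξs : 0 ≤ ξ s := hξ_nonneg s hspos
  have hηpos : 0 < ε / (2 * (A * ξ s + 1)) := by positivity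
  obtain ⟨n₀, hn₀⟩ := exists_pow_lt_of_lt_one hηpos hq₀1
  refine ⟨s + n₀ * T + 1, fun t ht => ?_⟩
  have hn₀T : (0:ℝ) ≤ n₀ * T := by positivity
  have hts : s ≤ t := by linarith
  have htpos : 0 < t := lt_of_lt_of_le hspos hts
  set n : ℕ := ⌊(t - s) / T⌋₊ with hndef
  have hn₀n : n₀ ≤ n := by
    refine Nat.le_floor ?_
    rw [le_div_iff₀ hT]
    linarith
  have ha1 : s + n * T ≤ t := by
    have h1 := Nat.floor_le (show 0 ≤ (t - s)/T from div_nonneg (by linarith) hT.le)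
    rw [← hndef] at h1
    have h2 := (le_div_iff₀ hT).1 h1
    linarith
  have ha2 : t ≤ (s + n * T) + T := by
    have h1 := Nat.lt_floor_add_one ((t - s)/T)
    rw [← hndef] at h1
    have h2 := (div_lt_iff₀ hT).1 h1
    nlinarith
  have hsa : s ≤ s + n * T := le_add_of_nonneg_right (by positivity)
  have hbd1 := A1' (s + n * T) t hsa ha1 ha2
  have hbd2 := B n
  have hexpA : Real.exp (M + ε₁) ≤ A := Real.exp_le_exp.2 (by linarith)
  have hξa : 0 ≤ ξ (s + n * T) := hξ_nonneg _ (lt_of_lt_of_le hspos hsa)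
  have hq₀n : q ^ n ≤ q₀ ^ n₀ := by
    calc q ^ n ≤ q₀ ^ n := pow_le_pow_left₀ hqpos.le hqq₀ n
      _ ≤ q₀ ^ n₀ := pow_le_pow_of_le_one hq₀pos.le hq₀1.le hn₀n
  have hq₀n₀pos : (0:ℝ) < q₀ ^ n₀ := by positivity
  -- assemble the numeric bound
  have f1 : ξ t ≤ A * (q ^ n * ξ s + c / (1 - q₀)) + c := by
    have h1 : Real.exp (M + ε₁) * ξ (s + n * T) ≤ A * ξ (s + n * T) :=
      mul_le_mul_of_nonneg_right hexpA hξa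
    have h2 : A * ξ (s + n * T) ≤ A * (q ^ n * ξ s + c / (1 - q₀)) :=
      mul_le_mul_of_nonneg_left hbd2 hApos.le
    calc ξ t ≤ Real.exp (M + ε₁) * ξ (s + n * T) + c := hbd1
      _ ≤ A * (q ^ n * ξ s + c / (1 - q₀)) + c := by linarith
  have f2 : A * (q ^ n * ξ s) ≤ (A * ξ s + 1) * q₀ ^ n₀ := by
    have h1 : A * ξ s * (q ^ n) ≤ (A * ξ s) * q₀ ^ n₀ :=
      mul_le_mul_of_nonneg_left hq₀n (by positivity)
    nlinarith
  have f3 : (A * ξ s + 1) * q₀ ^ n₀ < ε / 2 := by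
    have h1 : (A * ξ s + 1) * q₀ ^ n₀ < (A * ξ s + 1) * (ε / (2 * (A * ξ s + 1))) :=
      mul_lt_mul_of_pos_left hn₀ (by positivity)
    have h2 : (A * ξ s + 1) * (ε / (2 * (A * ξ s + 1))) = ε / 2 := by
      field_simp
    linarith
  have f4 : A * (c / (1 - q₀)) + c ≤ ε / 2 := by
    have hc2 : c ≤ ε * (1 - q₀) / (4 * A) := by
      have h1 : 2 * A * ε₁ ≤ 2 * A * (ε * (1 - q₀) / (8 * A * A)) :=
        mul_le_mul_of_nonneg_left hε₁ε (by positivity)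
      have h2 : 2 * A * (ε * (1 - q₀) / (8 * A * A)) = ε * (1 - q₀) / (4 * A) := by
        field_simp
        ring
      linarith
    have hterm1 : A * (c / (1 - q₀)) ≤ ε / 4 := by
      have h1 : c / (1 - q₀) ≤ (ε * (1 - q₀) / (4 * A)) / (1 - q₀) := by
        gcongr
      have h2 : (ε * (1 - q₀) / (4 * A)) / (1 - q₀) = ε / (4 * A) := by
        field_simp
      have h3 : A * (ε / (4 * A)) = ε / 4 := by field_simp
      calc A * (c / (1 - q₀)) ≤ A * (ε / (4 * A)) := by
            rw [← h2]; exact mul_le_mul_of_nonneg_left h1 hApos.le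
        _ = ε / 4 := h3
    have hterm2 : c ≤ ε / 4 := by
      refine hc2.trans ?_
      rw [div_le_div_iff₀ (by positivity) (by norm_num)]
      nlinarith
    linarith
  have hξtn : 0 ≤ ξ t := hξ_nonneg t htpos
  have htotal : ξ t < ε := by
    have : ξ t ≤ A * (q ^ n * ξ s) + (A * (c / (1 - q₀)) + c) := by
      have : A * (q ^ n * ξ s + c / (1 - q₀)) = A * (q ^ n * ξ s) + A * (c / (1 - q₀)) := by
        ring
      linarith [f1, this]
    calc ξ t ≤ A * (q ^ n * ξ s) + (A * (c / (1 - q₀)) + c) := this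
      _ ≤ (A * ξ s + 1) * q₀ ^ n₀ + (A * (c / (1 - q₀)) + c) := by linarith
      _ < ε / 2 + ε / 2 := by linarith
      _ = ε := by ring
  rw [Real.dist_eq, sub_zero, abs_of_nonneg hξtn]
  exact htotal


end GGMain
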